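/- In the preconditioned linear Anderson mixing setup with a fixed nonsingular preconditioner M ∈ ℝ^{d×d}, let k ≥ 1 and suppose rank(R_k) = k. Then the projected iterate coincides with the right-preconditioned GMRES iterate: x̄_k = x_k^{RG}, i.e., x̄_k is the unique minimizer of x ↦ ‖b − Ax‖₂ over the affine subspace x₀ + 𝒦_k(M⁻¹A, M⁻¹r(x₀)). -/
import Mathlib


open Matrix

/-- The Euclidean (ℓ₂) norm of a vector in `ℝ^n`. -/
noncomputable def norm2 {n : ℕ} (v : Fin n → ℝ) : ℝ := Real.sqrt (∑ i, v i ^ 2)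

/-- The residual `r(x) = b − Ax`. -/
def resid {d : ℕ} (A : Matrix (Fin d) (Fin d) ℝ) (b : Fin d → ℝ) (x : Fin d → ℝ) :
    Fin d → ℝ := b - A.mulVec x

/-- The matrix whose columns are the first `j` forward differences of the sequence `v`. -/
def diffMat {d : ℕ} (v : ℕ → Fin d → ℝ) (j : ℕ) : Matrix (Fin d) (Fin j) ℝ :=
  Matrix.of fun i (l : Fin j) => v ((l : ℕ) + 1) i - v (l : ℕ) i

/-- The `k`-th Krylov subspace `𝒦_k(B, v) = span{v, Bv, …, B^{k−1}v}`. -/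
def krylov {d : ℕ} (B : Matrix (Fin d) (Fin d) ℝ) (v : Fin d → ℝ) (k : ℕ) :
    Submodule ℝ (Fin d → ℝ) :=
  Submodule.span ℝ {w | ∃ i < k, w = (B ^ i).mulVec v}

lemma sumSq_nonneg {n : ℕ} (v : Fin n → ℝ) : 0 ≤ ∑ i, v i ^ 2 :=
  Finset.sum_nonneg fun i _ => sq_nonneg _

lemma norm2_le_norm2 {n : ℕ} {u v : Fin n → ℝ} (h : ∑ i, u i ^ 2 ≤ ∑ i, v i ^ 2) :
    norm2 u ≤ norm2 v := Real.sqrt_le_sqrt h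

lemma sumSq_le_of_norm2_le {n : ℕ} {u v : Fin n → ℝ} (h : norm2 u ≤ norm2 v) :
    ∑ i, u i ^ 2 ≤ ∑ i, v i ^ 2 :=
  (Real.sqrt_le_sqrt_iff (sumSq_nonneg v)).mp h

lemma krylov_mono {d : ℕ} (B : Matrix (Fin d) (Fin d) ℝ) (v : Fin d → ℝ) {j j' : ℕ}
    (h : j ≤ j') : krylov B v j ≤ krylov B v j' :=
  Submodule.span_mono (fun w hw => by obtain ⟨i, hi, he⟩ := hw; exact ⟨i, lt_of_lt_of_le hi h, he⟩)

lemma v_mem_krylov {d : ℕ} (B : Matrix (Fin d) (Fin d) ℝ) (v : Fin d → ℝ) {j : ℕ}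
    (h : 1 ≤ j) : v ∈ krylov B v j :=
  Submodule.subset_span ⟨0, h, by simp⟩

lemma mulVec_mem_krylov {d : ℕ} {B : Matrix (Fin d) (Fin d) ℝ} {v : Fin d → ℝ} {j : ℕ}
    {w : Fin d → ℝ} (h : w ∈ krylov B v j) : B.mulVec w ∈ krylov B v (j + 1) := by
  induction h using Submodule.span_induction with
  | mem w hw =>
    obtain ⟨i, hi, rfl⟩ := hw
    exact Submodule.subset_span ⟨i + 1, by omega, by rw [mulVec_mulVec, ← pow_succ']⟩
  | zero => rw [Matrix.mulVec_zero]; exact Submodule.zero_mem _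
  | add u w _ _ hu hw => rw [Matrix.mulVec_add]; exact Submodule.add_mem _ hu hw
  | smul a u _ hu => rw [Matrix.mulVec_smul]; exact Submodule.smul_mem _ _ hu

/-- **Proposition 3** (preconditioned Anderson mixing is right-preconditioned GMRES on
strongly convex quadratics): if `rank R_k = k`, the projected iterate
`x̄_k = x_k − X_kΓ_k` is the unique minimizer of `x ↦ ‖b − Ax‖₂` over the affine subspace
`x₀ + 𝒦_k(M⁻¹A, M⁻¹r(x₀))`, i.e. `x̄_k = x_k^{RG}`. -/
theorem preconditioned_anderson_mixing_eq_gmres (d : ℕ) (hd : 1 ≤ d)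
    (A : Matrix (Fin d) (Fin d) ℝ) (hA : A.PosDef)
    (M : Matrix (Fin d) (Fin d) ℝ) (hM : IsUnit M.det)
    (b x0 : Fin d → ℝ)
    (x : ℕ → Fin d → ℝ) (Γ : (j : ℕ) → Fin j → ℝ)
    (hx0 : x 0 = x0)
    (hx1 : x 1 = x 0 + M⁻¹.mulVec (resid A b (x 0)))
    (hΓ : ∀ j : ℕ, ∀ G : Fin j → ℝ,
      norm2 (resid A b (x j) - (diffMat (fun i => resid A b (x i)) j).mulVec (Γ j)) ≤
        norm2 (resid A b (x j) - (diffMat (fun i => resid A b (x i)) j).mulVec G))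
    (hrec : ∀ j : ℕ, 1 ≤ j →
      x (j + 1) = x j + M⁻¹.mulVec (resid A b (x j))
        - (diffMat x j + M⁻¹ * diffMat (fun i => resid A b (x i)) j).mulVec (Γ j))
    (k : ℕ) (hk : 1 ≤ k)
    (hrank : (diffMat (fun i => resid A b (x i)) k).rank = k) :
    (x k - (diffMat x k).mulVec (Γ k)) - x0
        ∈ krylov (M⁻¹ * A) (M⁻¹.mulVec (resid A b x0)) k ∧
    (∀ y : Fin d → ℝ, y - x0 ∈ krylov (M⁻¹ * A) (M⁻¹.mulVec (resid A b x0)) k →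
      norm2 (resid A b (x k - (diffMat x k).mulVec (Γ k))) ≤ norm2 (resid A b y)) ∧
    (∀ y : Fin d → ℝ, y - x0 ∈ krylov (M⁻¹ * A) (M⁻¹.mulVec (resid A b x0)) k →
      (∀ z : Fin d → ℝ, z - x0 ∈ krylov (M⁻¹ * A) (M⁻¹.mulVec (resid A b x0)) k →
        norm2 (resid A b y) ≤ norm2 (resid A b z)) →
      y = x k - (diffMat x k).mulVec (Γ k)) := by
  have hAdet : IsUnit A.det := isUnit_iff_ne_zero.mpr (ne_of_gt hA.det_pos)
  set v0 : Fin d → ℝ := M⁻¹.mulVec (resid A b x0) with hv0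
  set B : Matrix (Fin d) (Fin d) ℝ := M⁻¹ * A with hBdef
  set K : ℕ → Submodule ℝ (Fin d → ℝ) := fun j => krylov B v0 j with hKdef
  -- R_j = -(A * X_j)
  have hRX : ∀ j, diffMat (fun i => resid A b (x i)) j = -(A * diffMat x j) := by
    intro j
    ext i l
    simp only [diffMat, resid, Matrix.of_apply, Matrix.neg_apply, Matrix.mul_apply,
      Pi.sub_apply, Matrix.mulVec, dotProduct, mul_sub]
    rw [Finset.sum_sub_distrib]
    ring
  -- residual affine formula
  have hresid : ∀ y, resid A b y = resid A b x0 - A.mulVec (y - x0) := by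
    intro y
    simp only [resid, Matrix.mulVec_sub]
    abel
  -- telescoping
  have hxtel : ∀ j, x j - x0 = ∑ l ∈ Finset.range j, (x (l + 1) - x l) := by
    intro j
    induction j with
    | zero => simp [hx0]
    | succ n ih => rw [Finset.sum_range_succ, ← ih]; abel
  -- X_j G as a combination of columns
  have hXcomb : ∀ j (G : Fin j → ℝ),
      (diffMat x j).mulVec G = ∑ l : Fin j, G l • (x ((l : ℕ) + 1) - x (l : ℕ)) := by
    intro j G
    funext i
    simp only [Matrix.mulVec, dotProduct, diffMat, Matrix.of_apply, Finset.sum_apply,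
      Pi.smul_apply, Pi.sub_apply, smul_eq_mul]
    exact Finset.sum_congr rfl fun l _ => by ring
  have hXmem : ∀ j (G : Fin j → ℝ),
      (∀ l : Fin j, x ((l : ℕ) + 1) - x (l : ℕ) ∈ K ((l : ℕ) + 1)) →
      (diffMat x j).mulVec G ∈ K j := by
    intro j G hcols
    rw [hXcomb]
    exact Submodule.sum_mem _ fun l _ =>
      Submodule.smul_mem _ _ (krylov_mono B v0 (by omega) (hcols l))
  -- key membership of the differences
  have hΔ : ∀ l, x (l + 1) - x l ∈ K (l + 1) := by
    intro l
    induction l using Nat.strong_induction_on with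
    | _ l IH =>
      rcases Nat.eq_zero_or_pos l with rfl | hl
      · have h1 : x 1 - x 0 = v0 := by rw [hx1, hx0]; exact add_sub_cancel_left _ _
        rw [h1]
        exact v_mem_krylov B v0 le_rfl
      · have hxl : x l - x0 ∈ K l := by
          rw [hxtel l]
          exact Submodule.sum_mem _ fun i hi =>
            krylov_mono B v0 (by simp at hi; omega) (IH i (by simp at hi; omega))
        have hXG : (diffMat x l).mulVec (Γ l) ∈ K l :=
          hXmem l (Γ l) (fun i => IH i i.isLt)
        have h1 : M⁻¹.mulVec (resid A b (x l)) = v0 - B.mulVec (x l - x0) := by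
          rw [hresid (x l), Matrix.mulVec_sub, hBdef, ← Matrix.mulVec_mulVec]
        have h2 : (M⁻¹ * diffMat (fun i => resid A b (x i)) l).mulVec (Γ l)
            = -B.mulVec ((diffMat x l).mulVec (Γ l)) := by
          rw [hRX l, Matrix.mul_neg, Matrix.neg_mulVec, Matrix.mulVec_mulVec, hBdef,
            Matrix.mul_assoc]
        have h3 : x (l + 1) - x l
            = (v0 - B.mulVec (x l - x0)) -
              ((diffMat x l).mulVec (Γ l) + -B.mulVec ((diffMat x l).mulVec (Γ l))) := by
          rw [hrec l hl, Matrix.add_mulVec, h1, h2]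
          abel
        rw [h3]
        refine Submodule.sub_mem _ (Submodule.sub_mem _ ?_ ?_) (Submodule.add_mem _ ?_ ?_)
        · exact v_mem_krylov B v0 (by omega)
        · exact mulVec_mem_krylov hxl
        · exact krylov_mono B v0 (by omega) hXG
        · exact Submodule.neg_mem _ (mulVec_mem_krylov hXG)
  have hXmem' : ∀ j (G : Fin j → ℝ), (diffMat x j).mulVec G ∈ K j :=
    fun j G => hXmem j G (fun l => hΔ l)
  have hxK : ∀ j, x j - x0 ∈ K j := by
    intro j
    rw [hxtel j]
    exact Submodule.sum_mem _ fun i hi =>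
      krylov_mono B v0 (by simp at hi; omega) (hΔ i)
  -- rank of X_k and span equality
  have hXrank : (diffMat x k).rank = k := by
    have h := hrank
    rw [hRX k, ← Matrix.neg_mul,
      Matrix.rank_mul_eq_right_of_isUnit_det (-A) (diffMat x k)
        (by rw [Matrix.det_neg]; exact ((isUnit_one.neg).pow _).mul hAdet)] at h
    exact h
  have hspan : K k ≤ LinearMap.range (diffMat x k).mulVecLin := by
    have hle : LinearMap.range (diffMat x k).mulVecLin ≤ K k := by
      rintro w ⟨G, rfl⟩
      exact hXmem' k G
    have hfin : Module.finrank ℝ (K k) ≤ k := by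
      have hsub : ({w | ∃ i < k, w = (B ^ i).mulVec v0} : Set (Fin d → ℝ))
          ⊆ Set.range (fun i : Fin k => (B ^ (i : ℕ)).mulVec v0) := by
        rintro w ⟨i, hi, rfl⟩
        exact ⟨⟨i, hi⟩, rfl⟩
      calc Module.finrank ℝ (K k)
          ≤ Module.finrank ℝ (Submodule.span ℝ
              (Set.range (fun i : Fin k => (B ^ (i : ℕ)).mulVec v0))) :=
            Submodule.finrank_mono (Submodule.span_mono hsub)
        _ ≤ Fintype.card (Fin k) := finrank_range_le_card _
        _ = k := Fintype.card_fin k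
    have hrk : Module.finrank ℝ (LinearMap.range (diffMat x k).mulVecLin) = k := hXrank
    have heq : LinearMap.range (diffMat x k).mulVecLin = K k :=
      Submodule.eq_of_le_of_finrank_le hle (hfin.trans hrk.ge)
    rw [heq]
  -- key residual identity
  have hkey : ∀ G : Fin k → ℝ,
      resid A b (x k - (diffMat x k).mulVec G)
        = resid A b (x k) - (diffMat (fun i => resid A b (x i)) k).mulVec G := by
    intro G
    rw [hRX k, Matrix.neg_mulVec, sub_neg_eq_add]
    simp only [resid, Matrix.mulVec_sub, ← Matrix.mulVec_mulVec]
    abel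
  have hrep : ∀ y : Fin d → ℝ, y - x0 ∈ K k →
      ∃ G : Fin k → ℝ, y - x0 = (diffMat x k).mulVec G := by
    intro y hy
    obtain ⟨G, hG⟩ := hspan hy
    exact ⟨G, by simpa using hG.symm⟩
  obtain ⟨G0, hG0⟩ := hrep (x k) (hxK k)
  -- minimality over the Krylov affine subspace
  have hmin : ∀ y : Fin d → ℝ, y - x0 ∈ K k →
      norm2 (resid A b (x k - (diffMat x k).mulVec (Γ k))) ≤ norm2 (resid A b y) := by
    intro y hy
    obtain ⟨G, hGy⟩ := hrep y hy
    have hy' : resid A b (x k)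
        - (diffMat (fun i => resid A b (x i)) k).mulVec (G0 - G) = resid A b y := by
      rw [hRX k, Matrix.neg_mulVec, sub_neg_eq_add, hresid (x k), hresid y, hGy, hG0]
      simp only [Matrix.mulVec_sub, ← Matrix.mulVec_mulVec]
      abel
    calc norm2 (resid A b (x k - (diffMat x k).mulVec (Γ k)))
        = norm2 (resid A b (x k)
            - (diffMat (fun i => resid A b (x i)) k).mulVec (Γ k)) := by rw [hkey (Γ k)]
      _ ≤ norm2 (resid A b (x k)
            - (diffMat (fun i => resid A b (x i)) k).mulVec (G0 - G)) := hΓ k (G0 - G)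
      _ = norm2 (resid A b y) := by rw [hy']
  have hxbK : (x k - (diffMat x k).mulVec (Γ k)) - x0 ∈ K k := by
    have h : (x k - (diffMat x k).mulVec (Γ k)) - x0
        = (x k - x0) - (diffMat x k).mulVec (Γ k) := by abel
    rw [h]
    exact Submodule.sub_mem _ (hxK k) (hXmem' k (Γ k))
  refine ⟨hxbK, hmin, ?_⟩
  -- uniqueness
  intro y hy hymin
  set xb := x k - (diffMat x k).mulVec (Γ k) with hxbdef
  have h1 : norm2 (resid A b xb) ≤ norm2 (resid A b y) := hmin y hy
  have h2 : norm2 (resid A b y) ≤ norm2 (resid A b xb) := hymin xb hxbK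
  set z := (1 / 2 : ℝ) • (y + xb) with hzdef
  have hzK : z - x0 ∈ K k := by
    have h : z - x0 = (1 / 2 : ℝ) • ((y - x0) + (xb - x0)) := by
      funext i
      simp only [hzdef, Pi.smul_apply, Pi.add_apply, Pi.sub_apply, smul_eq_mul]
      ring
    rw [h]
    exact Submodule.smul_mem _ _ (Submodule.add_mem _ hy hxbK)
  have hzres : resid A b z = (1 / 2 : ℝ) • (resid A b y + resid A b xb) := by
    funext i
    simp only [resid, hzdef, Matrix.mulVec, dotProduct, Pi.smul_apply, Pi.add_apply,
      Pi.sub_apply, smul_eq_mul, mul_add, Finset.sum_add_distrib]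
    have e1 : ∑ m, A i m * (1 / 2 * y m) = 1 / 2 * ∑ m, A i m * y m := by
      rw [Finset.mul_sum]; exact Finset.sum_congr rfl fun m _ => by ring
    have e2 : ∑ m, A i m * (1 / 2 * xb m) = 1 / 2 * ∑ m, A i m * xb m := by
      rw [Finset.mul_sum]; exact Finset.sum_congr rfl fun m _ => by ring
    rw [e1, e2]
    ring
  set a1 := resid A b y with ha1
  set a2 := resid A b xb with ha2
  have hq1 : ∑ i, a1 i ^ 2 ≤ ∑ i, (resid A b z) i ^ 2 :=
    sumSq_le_of_norm2_le (hymin z hzK)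
  have hq2 : ∑ i, a2 i ^ 2 ≤ ∑ i, (resid A b z) i ^ 2 :=
    sumSq_le_of_norm2_le (hmin z hzK)
  have hpar : ∑ i, (resid A b z) i ^ 2
      = ((∑ i, a1 i ^ 2) + ∑ i, a2 i ^ 2) / 2 - ∑ i, ((a1 i - a2 i) / 2) ^ 2 := by
    rw [hzres]
    have h : ∀ i, ((1 / 2 : ℝ) • (a1 + a2)) i ^ 2
        = (a1 i ^ 2 + a2 i ^ 2) / 2 - ((a1 i - a2 i) / 2) ^ 2 := by
      intro i
      simp only [Pi.smul_apply, Pi.add_apply, smul_eq_mul]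
      ring
    rw [Finset.sum_congr rfl fun i _ => h i, Finset.sum_sub_distrib, ← Finset.sum_div,
      Finset.sum_add_distrib]
  have hzero : ∑ i, ((a1 i - a2 i) / 2) ^ 2 ≤ 0 := by linarith
  have hterms := (Finset.sum_eq_zero_iff_of_nonneg
    (fun i _ => sq_nonneg ((a1 i - a2 i) / 2))).mp
    (le_antisymm hzero (Finset.sum_nonneg fun i _ => sq_nonneg _))
  have ha12 : a1 = a2 := by
    funext i
    have h := hterms i (Finset.mem_univ i)
    have := sq_eq_zero_iff.mp h
    linarith [this]
  have hAv : A.mulVec y = A.mulVec xb := by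
    have h : b - A.mulVec y = b - A.mulVec xb := ha12
    exact sub_right_inj.mp h
  exact Matrix.mulVec_injective_iff_isUnit.mpr
    (Matrix.isUnit_iff_isUnit_det A |>.mpr hAdet) hAv
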